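/- arXiv:1808.03258 — 2 statements merged into one kernel-verified Lean document; each statement's English description precedes it below -/
import Mathlib

section
/- Let N be divisible by 2, h > 0, ξ₁,...,ξ_N independent with E[ξᵢ]=0 and E[ξᵢ²] = 2σ²/(Nh), u deterministic, u0 = u+ξ. Define v¹(i) = (u0(2i-1)+u0(2i))/2, u¹(i) = (u(2i-1)+u(2i))/2 for i=1,...,N/2, and V₂ = (1/(2h)) Σ_{i=1}^{N/2-1} (v¹(i+1)-v¹(i))². Then E[V₂] = (1/2 - 1/N)(σ²/h²) + (1/(2h)) Σ_{i=1}^{N/2-1} (u¹(i+1)-u¹(i))². -/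
open Finset MeasureTheory ProbabilityTheory

lemma quad_int {Ω : Type*} [MeasureSpace Ω] [IsProbabilityMeasure (ℙ : Measure Ω)]
    (A B C E : Ω → ℝ) (d vv : ℝ)
    (hA : MemLp A 2 ℙ) (hB : MemLp B 2 ℙ) (hC : MemLp C 2 ℙ) (hE : MemLp E 2 ℙ)
    (hAm : ∫ ω, A ω = 0) (hBm : ∫ ω, B ω = 0) (hCm : ∫ ω, C ω = 0) (hEm : ∫ ω, E ω = 0)
    (hAv : ∫ ω, (A ω)^2 = vv) (hBv : ∫ ω, (B ω)^2 = vv)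
    (hCv : ∫ ω, (C ω)^2 = vv) (hEv : ∫ ω, (E ω)^2 = vv)
    (hAB : ∫ ω, A ω * B ω = 0) (hAC : ∫ ω, A ω * C ω = 0) (hAE : ∫ ω, A ω * E ω = 0)
    (hBC : ∫ ω, B ω * C ω = 0) (hBE : ∫ ω, B ω * E ω = 0) (hCE : ∫ ω, C ω * E ω = 0) :
    Integrable (fun ω => (d + (A ω + B ω - C ω - E ω)/2)^2) ℙ ∧
      ∫ ω, (d + (A ω + B ω - C ω - E ω)/2)^2 = d^2 + vv := by
  have imul : ∀ (f g : Ω → ℝ), MemLp f 2 ℙ → MemLp g 2 ℙ →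
      Integrable (fun ω => f ω * g ω) ℙ := by
    intro f g hf hg
    have : MemLp (f • g) 1 ℙ := hg.smul hf (hpqr := ⟨by
      rw [inv_one]; exact ENNReal.inv_two_add_inv_two⟩)
    exact this.integrable le_rfl
  have iA := hA.integrable one_le_two
  have iB := hB.integrable one_le_two
  have iC := hC.integrable one_le_two
  have iE := hE.integrable one_le_two
  have pAA := imul A A hA hA
  have pBB := imul B B hB hB
  have pCC := imul C C hC hC
  have pEE := imul E E hE hE
  have pAB := imul A B hA hB
  have pAC := imul A C hA hC
  have pAE := imul A E hA hE
  have pBC := imul B C hB hC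
  have pBE := imul B E hB hE
  have pCE := imul C E hC hE
  have hAv' : ∫ ω, A ω * A ω = vv := by simpa [pow_two] using hAv
  have hBv' : ∫ ω, B ω * B ω = vv := by simpa [pow_two] using hBv
  have hCv' : ∫ ω, C ω * C ω = vv := by simpa [pow_two] using hCv
  have hEv' : ∫ ω, E ω * E ω = vv := by simpa [pow_two] using hEv
  have key : (fun ω => (d + (A ω + B ω - C ω - E ω)/2)^2)
      = fun ω => (d^2 + (d*A ω + d*B ω - d*C ω - d*E ω))
        + (((A ω*A ω)/4 + (B ω*B ω)/4 + (C ω*C ω)/4 + (E ω*E ω)/4)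
        + ((A ω*B ω)/2 + (C ω*E ω)/2 - (A ω*C ω)/2 - (A ω*E ω)/2
            - (B ω*C ω)/2 - (B ω*E ω)/2)) := by
    funext ω; ring
  have IL : Integrable (fun ω => d*A ω + d*B ω - d*C ω - d*E ω) ℙ := by
    exact (((iA.const_mul d).add (iB.const_mul d)).sub (iC.const_mul d)).sub (iE.const_mul d)
  have I1 : Integrable (fun ω => d^2 + (d*A ω + d*B ω - d*C ω - d*E ω)) ℙ := by
    exact (integrable_const _).add IL
  have I2 : Integrable (fun ω =>
      (A ω*A ω)/4 + (B ω*B ω)/4 + (C ω*C ω)/4 + (E ω*E ω)/4) ℙ := by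
    exact (((pAA.div_const 4).add (pBB.div_const 4)).add (pCC.div_const 4)).add (pEE.div_const 4)
  have I3 : Integrable (fun ω =>
      (A ω*B ω)/2 + (C ω*E ω)/2 - (A ω*C ω)/2 - (A ω*E ω)/2
        - (B ω*C ω)/2 - (B ω*E ω)/2) ℙ := by
    exact (((((pAB.div_const 2).add (pCE.div_const 2)).sub (pAC.div_const 2)).sub
      (pAE.div_const 2)).sub (pBC.div_const 2)).sub (pBE.div_const 2)
  have g1 : ∫ ω, (d^2 + (d*A ω + d*B ω - d*C ω - d*E ω)) = d^2 := by
    have t1 : ∫ ω, (d^2 + (d*A ω + d*B ω - d*C ω - d*E ω))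
        = (∫ (_ : Ω), d^2) + ∫ ω, (d*A ω + d*B ω - d*C ω - d*E ω) :=
      integral_add (integrable_const _) IL
    have t2 : ∫ ω, (d*A ω + d*B ω - d*C ω - d*E ω)
        = (∫ ω, (d*A ω + d*B ω - d*C ω)) - ∫ ω, d*E ω :=
      integral_sub (((iA.const_mul d).add (iB.const_mul d)).sub (iC.const_mul d))
        (iE.const_mul d)
    have t3 : ∫ ω, (d*A ω + d*B ω - d*C ω)
        = (∫ ω, (d*A ω + d*B ω)) - ∫ ω, d*C ω :=
      integral_sub ((iA.const_mul d).add (iB.const_mul d)) (iC.const_mul d)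
    have t4 : ∫ ω, (d*A ω + d*B ω) = (∫ ω, d*A ω) + ∫ ω, d*B ω :=
      integral_add (iA.const_mul d) (iB.const_mul d)
    rw [t1, t2, t3, t4, integral_const_mul, integral_const_mul, integral_const_mul,
      integral_const_mul, hAm, hBm, hCm, hEm]
    simp
  have g2 : ∫ ω, ((A ω*A ω)/4 + (B ω*B ω)/4 + (C ω*C ω)/4 + (E ω*E ω)/4) = vv := by
    have t1 : ∫ ω, ((A ω*A ω)/4 + (B ω*B ω)/4 + (C ω*C ω)/4 + (E ω*E ω)/4)
        = (∫ ω, ((A ω*A ω)/4 + (B ω*B ω)/4 + (C ω*C ω)/4)) + ∫ ω, (E ω*E ω)/4 :=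
      integral_add (((pAA.div_const 4).add (pBB.div_const 4)).add (pCC.div_const 4))
        (pEE.div_const 4)
    have t2 : ∫ ω, ((A ω*A ω)/4 + (B ω*B ω)/4 + (C ω*C ω)/4)
        = (∫ ω, ((A ω*A ω)/4 + (B ω*B ω)/4)) + ∫ ω, (C ω*C ω)/4 :=
      integral_add ((pAA.div_const 4).add (pBB.div_const 4)) (pCC.div_const 4)
    have t3 : ∫ ω, ((A ω*A ω)/4 + (B ω*B ω)/4)
        = (∫ ω, (A ω*A ω)/4) + ∫ ω, (B ω*B ω)/4 :=
      integral_add (pAA.div_const 4) (pBB.div_const 4)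
    rw [t1, t2, t3, integral_div, integral_div, integral_div, integral_div,
      hAv', hBv', hCv', hEv']
    ring
  have g3 : ∫ ω, ((A ω*B ω)/2 + (C ω*E ω)/2 - (A ω*C ω)/2 - (A ω*E ω)/2
      - (B ω*C ω)/2 - (B ω*E ω)/2) = 0 := by
    have t1 : ∫ ω, ((A ω*B ω)/2 + (C ω*E ω)/2 - (A ω*C ω)/2 - (A ω*E ω)/2
          - (B ω*C ω)/2 - (B ω*E ω)/2)
        = (∫ ω, ((A ω*B ω)/2 + (C ω*E ω)/2 - (A ω*C ω)/2 - (A ω*E ω)/2 - (B ω*C ω)/2))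
          - ∫ ω, (B ω*E ω)/2 :=
      integral_sub (((((pAB.div_const 2).add (pCE.div_const 2)).sub
        (pAC.div_const 2)).sub (pAE.div_const 2)).sub (pBC.div_const 2)) (pBE.div_const 2)
    have t2 : ∫ ω, ((A ω*B ω)/2 + (C ω*E ω)/2 - (A ω*C ω)/2 - (A ω*E ω)/2 - (B ω*C ω)/2)
        = (∫ ω, ((A ω*B ω)/2 + (C ω*E ω)/2 - (A ω*C ω)/2 - (A ω*E ω)/2))
          - ∫ ω, (B ω*C ω)/2 :=
      integral_sub ((((pAB.div_const 2).add (pCE.div_const 2)).sub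
        (pAC.div_const 2)).sub (pAE.div_const 2)) (pBC.div_const 2)
    have t3 : ∫ ω, ((A ω*B ω)/2 + (C ω*E ω)/2 - (A ω*C ω)/2 - (A ω*E ω)/2)
        = (∫ ω, ((A ω*B ω)/2 + (C ω*E ω)/2 - (A ω*C ω)/2)) - ∫ ω, (A ω*E ω)/2 :=
      integral_sub (((pAB.div_const 2).add (pCE.div_const 2)).sub
        (pAC.div_const 2)) (pAE.div_const 2)
    have t4 : ∫ ω, ((A ω*B ω)/2 + (C ω*E ω)/2 - (A ω*C ω)/2)
        = (∫ ω, ((A ω*B ω)/2 + (C ω*E ω)/2)) - ∫ ω, (A ω*C ω)/2 :=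
      integral_sub ((pAB.div_const 2).add (pCE.div_const 2)) (pAC.div_const 2)
    have t5 : ∫ ω, ((A ω*B ω)/2 + (C ω*E ω)/2)
        = (∫ ω, (A ω*B ω)/2) + ∫ ω, (C ω*E ω)/2 :=
      integral_add (pAB.div_const 2) (pCE.div_const 2)
    rw [t1, t2, t3, t4, t5, integral_div, integral_div, integral_div, integral_div,
      integral_div, integral_div, hAB, hAC, hAE, hBC, hBE, hCE]
    ring
  have c1 : ∫ ω, ((d^2 + (d*A ω + d*B ω - d*C ω - d*E ω))
        + (((A ω*A ω)/4 + (B ω*B ω)/4 + (C ω*C ω)/4 + (E ω*E ω)/4)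
        + ((A ω*B ω)/2 + (C ω*E ω)/2 - (A ω*C ω)/2 - (A ω*E ω)/2
            - (B ω*C ω)/2 - (B ω*E ω)/2)))
      = (∫ ω, (d^2 + (d*A ω + d*B ω - d*C ω - d*E ω)))
        + ∫ ω, (((A ω*A ω)/4 + (B ω*B ω)/4 + (C ω*C ω)/4 + (E ω*E ω)/4)
        + ((A ω*B ω)/2 + (C ω*E ω)/2 - (A ω*C ω)/2 - (A ω*E ω)/2
            - (B ω*C ω)/2 - (B ω*E ω)/2)) :=
    integral_add I1 (I2.add I3)
  have c2 : ∫ ω, (((A ω*A ω)/4 + (B ω*B ω)/4 + (C ω*C ω)/4 + (E ω*E ω)/4)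
        + ((A ω*B ω)/2 + (C ω*E ω)/2 - (A ω*C ω)/2 - (A ω*E ω)/2
            - (B ω*C ω)/2 - (B ω*E ω)/2))
      = (∫ ω, ((A ω*A ω)/4 + (B ω*B ω)/4 + (C ω*C ω)/4 + (E ω*E ω)/4))
        + ∫ ω, ((A ω*B ω)/2 + (C ω*E ω)/2 - (A ω*C ω)/2 - (A ω*E ω)/2
            - (B ω*C ω)/2 - (B ω*E ω)/2) :=
    integral_add I2 I3
  constructor
  · rw [key]; exact I1.add (I2.add I3)
  · rw [key, c1, c2, g1, g2, g3]
    ring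

/-- Expectation of the once-coarsened variation `V₂`. Here `N = 2*M`,
indices are 0-based so `u¹ i = (u (2i) + u (2i+1))/2`. -/
theorem expected_V2 (M : ℕ) (hM : 1 ≤ M) (h σ : ℝ) (hh : 0 < h)
    {Ω : Type*} [MeasureSpace Ω] [IsProbabilityMeasure (ℙ : Measure Ω)]
    (ξ : ℕ → Ω → ℝ)
    (hindep : iIndepFun ξ ℙ)
    (hL2 : ∀ i, MemLp (ξ i) 2 ℙ)
    (hmean : ∀ i, ∫ ω, ξ i ω = 0)
    (hvar : ∀ i, ∫ ω, (ξ i ω)^2 = 2*σ^2/((2*M : ℕ)*h))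
    (u : ℕ → ℝ) (u0 : ℕ → Ω → ℝ)
    (hu0 : ∀ i ω, u0 i ω = u i + ξ i ω)
    (u₁ : ℕ → ℝ) (v₁ : ℕ → Ω → ℝ)
    (hu1 : ∀ i, u₁ i = (u (2*i) + u (2*i+1))/2)
    (hv1 : ∀ i ω, v₁ i ω = (u0 (2*i) ω + u0 (2*i+1) ω)/2)
    (V₂ : Ω → ℝ)
    (hV2 : ∀ ω, V₂ ω = (1/(2*h)) * ∑ i ∈ range (M-1), (v₁ (i+1) ω - v₁ i ω)^2) :
    ∫ ω, V₂ ω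
      = (1/2 - 1/(2*M : ℕ)) * (σ^2/h^2)
        + (1/(2*h)) * ∑ i ∈ range (M-1), (u₁ (i+1) - u₁ i)^2 := by
  set vv : ℝ := 2*σ^2/((2*M : ℕ)*h) with hvv
  have hcross : ∀ i j, i ≠ j → ∫ ω, ξ i ω * ξ j ω = 0 := by
    intro i j hij
    have H := (hindep.indepFun hij).integral_mul_eq_mul_integral
      ((hL2 i).integrable one_le_two).aestronglyMeasurable ((hL2 j).integrable one_le_two).aestronglyMeasurable
    rw [hmean i, hmean j, mul_zero] at H
    exact H
  have hconst : ∀ i ω, v₁ (i+1) ω - v₁ i ω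
      = (u₁ (i+1) - u₁ i) + (ξ (2*i+2) ω + ξ (2*i+3) ω - ξ (2*i) ω - ξ (2*i+1) ω)/2 := by
    intro i ω
    have e1 : 2*(i+1) = 2*i+2 := by ring
    have e2 : 2*(i+1)+1 = 2*i+3 := by ring
    simp only [hv1, hu0, hu1, e1, e2]
    ring
  have hquad : ∀ i : ℕ,
      Integrable (fun ω => (v₁ (i+1) ω - v₁ i ω)^2) ℙ ∧
        ∫ ω, (v₁ (i+1) ω - v₁ i ω)^2 = (u₁ (i+1) - u₁ i)^2 + vv := by
    intro i
    have hfun : (fun ω => (v₁ (i+1) ω - v₁ i ω)^2)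
        = fun ω => ((u₁ (i+1) - u₁ i)
          + (ξ (2*i+2) ω + ξ (2*i+3) ω - ξ (2*i) ω - ξ (2*i+1) ω)/2)^2 := by
      funext ω; rw [hconst]
    have H := quad_int (ξ (2*i+2)) (ξ (2*i+3)) (ξ (2*i)) (ξ (2*i+1)) (u₁ (i+1) - u₁ i) vv
      (hL2 _) (hL2 _) (hL2 _) (hL2 _)
      (hmean _) (hmean _) (hmean _) (hmean _)
      (hvar _) (hvar _) (hvar _) (hvar _)
      (hcross _ _ (by omega)) (hcross _ _ (by omega)) (hcross _ _ (by omega))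
      (hcross _ _ (by omega)) (hcross _ _ (by omega)) (hcross _ _ (by omega))
    constructor
    · rw [hfun]; exact H.1
    · rw [hfun]; exact H.2
  have hc : ∫ ω, (1/(2*h) * ∑ i ∈ range (M-1), (v₁ (i+1) ω - v₁ i ω)^2)
      = (1/(2*h)) * ∫ ω, ∑ i ∈ range (M-1), (v₁ (i+1) ω - v₁ i ω)^2 :=
    integral_const_mul _ _
  have hsum : ∫ ω, ∑ i ∈ range (M-1), (v₁ (i+1) ω - v₁ i ω)^2
      = ∑ i ∈ range (M-1), ∫ ω, (v₁ (i+1) ω - v₁ i ω)^2 :=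
    integral_finset_sum _ (fun i _ => (hquad i).1)
  have hint : ∫ ω, V₂ ω
      = (1/(2*h)) * ∑ i ∈ range (M-1), ((u₁ (i+1) - u₁ i)^2 + vv) := by
    simp only [hV2]
    rw [hc, hsum]
    congr 1
    exact Finset.sum_congr rfl fun i _ => (hquad i).2
  rw [hint, Finset.sum_add_distrib, Finset.sum_const, Finset.card_range, nsmul_eq_mul]
  have hMR : ((M-1 : ℕ) : ℝ) = (M : ℝ) - 1 := by
    have := Nat.cast_sub hM (R := ℝ); simpa using this
  have hM0 : (M : ℝ) ≠ 0 := Nat.cast_ne_zero.mpr (by omega)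
  have hh0 : h ≠ 0 := ne_of_gt hh
  rw [hvv, hMR]
  push_cast
  field_simp
  ring
end

section
/- Let N be divisible by 4, h > 0, ξ₁,...,ξ_N independent with E[ξᵢ]=0 and E[ξᵢ²]=2σ²/(Nh), u deterministic, u0 = u+ξ. Define v²(i) = (u0(4i-3)+u0(4i-2)+u0(4i-1)+u0(4i))/4 and u²(i) analogously from u, for i=1,...,N/4, and V₃ = (1/(4h)) Σ_{i=1}^{N/4-1} (v²(i+1)-v²(i))². Then E[V₃] = (1/16 - 1/(4N))(σ²/h²) + (1/(4h)) Σ_{i=1}^{N/4-1} (u²(i+1)-u²(i))². -/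
open Finset MeasureTheory ProbabilityTheory

/-- Expectation of the twice-coarsened variation `V₃`. Here `N = 4*M`,
indices are 0-based so `u² i` averages `u (4i), …, u (4i+3)`. -/
theorem expected_V3 (M : ℕ) (hM : 1 ≤ M) (h σ : ℝ) (hh : 0 < h)
    {Ω : Type*} [MeasureSpace Ω] [IsProbabilityMeasure (ℙ : Measure Ω)]
    (ξ : ℕ → Ω → ℝ)
    (hindep : iIndepFun ξ ℙ)
    (hL2 : ∀ i, MemLp (ξ i) 2 ℙ)
    (hmean : ∀ i, ∫ ω, ξ i ω = 0)
    (hvar : ∀ i, ∫ ω, (ξ i ω)^2 = 2*σ^2/((4*M : ℕ)*h))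
    (u : ℕ → ℝ) (u0 : ℕ → Ω → ℝ)
    (hu0 : ∀ i ω, u0 i ω = u i + ξ i ω)
    (u₂ : ℕ → ℝ) (v₂ : ℕ → Ω → ℝ)
    (hu2 : ∀ i, u₂ i = (u (4*i) + u (4*i+1) + u (4*i+2) + u (4*i+3))/4)
    (hv2 : ∀ i ω, v₂ i ω = (u0 (4*i) ω + u0 (4*i+1) ω + u0 (4*i+2) ω + u0 (4*i+3) ω)/4)
    (V₃ : Ω → ℝ)
    (hV3 : ∀ ω, V₃ ω = (1/(4*h)) * ∑ i ∈ range (M-1), (v₂ (i+1) ω - v₂ i ω)^2) :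
    ∫ ω, V₃ ω
      = (1/16 - 1/(4*(4*M : ℕ))) * (σ^2/h^2)
        + (1/(4*h)) * ∑ i ∈ range (M-1), (u₂ (i+1) - u₂ i)^2 := by
  have hMpos : (0:ℝ) < M := by exact_mod_cast hM
  -- coefficient function
  set a : ℕ → ℝ := fun j => if j < 4 then (-(1/4) : ℝ) else (1/4 : ℝ) with ha
  -- key pointwise decomposition
  have hdecomp : ∀ i ω, v₂ (i+1) ω - v₂ i ω
      = (u₂ (i+1) - u₂ i) + ∑ j ∈ range 8, a j * ξ (4*i+j) ω := by
    intro i ω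
    simp only [hv2, hu2, hu0]
    have h4 : 4*(i+1) = 4*i+4 := by ring
    rw [h4]
    simp [ha, Finset.sum_range_succ]
    ring
  -- per-index η
  set η : ℕ → Ω → ℝ := fun i ω => ∑ j ∈ range 8, a j * ξ (4*i+j) ω with hη
  have hηL2 : ∀ i, MemLp (η i) 2 ℙ := by
    intro i
    have : η i = ∑ j ∈ range 8, fun ω => a j * ξ (4*i+j) ω := by
      funext ω; simp [hη, Finset.sum_apply]
    rw [this]
    exact memLp_finset_sum' _ (fun j _ => (hL2 (4*i+j)).const_mul (a j))
  have hηmean : ∀ i, ∫ ω, η i ω = 0 := by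
    intro i
    rw [integral_finset_sum _ (fun j _ => ((hL2 (4*i+j)).integrable one_le_two).const_mul _)]
    simp [integral_const_mul, hmean]
  have hηvar : ∀ i, ∫ ω, (η i ω)^2 = σ^2/(4*M*h) := by
    intro i
    have hvarξ : ∀ j, Var[ξ j] = 2*σ^2/((4*M:ℕ)*h) := by
      intro j
      rw [variance_eq_sub (hL2 j)]
      simp only [Pi.pow_apply]
      rw [show (∫ ω, (ξ j ω)^2) = ∫ ω, (ξ j ω)^2 from rfl]
      rw [hvar j, hmean j]
      ring
    have hηeq : η i = ∑ j ∈ range 8, a j • ξ (4*i+j) := by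
      funext ω; simp [hη, Finset.sum_apply, smul_eq_mul]
    have hV : Var[η i] = ∑ j ∈ range 8, (a j)^2 * Var[ξ (4*i+j)] := by
      rw [hηeq, IndepFun.variance_sum (μ := ℙ)
        (fun j _ => (hL2 (4*i+j)).const_smul (a j))
        (fun j hj k hk hjk => ((hindep.indepFun (show 4*i+j ≠ 4*i+k by omega)).comp
          (measurable_const_smul (a j)) (measurable_const_smul (a k))))]
      exact Finset.sum_congr rfl fun j _ => variance_smul _ _ _
    have hmz : ∫ ω, η i ω = 0 := hηmean i
    have hvd := variance_eq_sub (hηL2 i)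
    simp only [Pi.pow_apply] at hvd
    have : Var[η i] = ∫ ω, (η i ω)^2 := by
      rw [hvd]
      rw [show (∫ ω, η i ω ∂ℙ) = 0 from hmz]
      ring
    rw [← this, hV]
    have : ∀ j ∈ range 8, (a j)^2 * Var[ξ (4*i+j)] = (1/16) * (2*σ^2/((4*M:ℕ)*h)) := by
      intro j hj
      rw [hvarξ]
      have : (a j)^2 = 1/16 := by
        simp only [ha]
        split <;> norm_num
      rw [this]
    rw [Finset.sum_congr rfl this, Finset.sum_const]
    simp only [card_range, nsmul_eq_mul, Nat.cast_ofNat, Nat.cast_mul]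
    field_simp
    ring
  -- integral of each squared increment
  have hkey : ∀ i, ∫ ω, (v₂ (i+1) ω - v₂ i ω)^2
      = (u₂ (i+1) - u₂ i)^2 + σ^2/(4*M*h) := by
    intro i
    set D := u₂ (i+1) - u₂ i with hD
    have heq : ∀ ω, (v₂ (i+1) ω - v₂ i ω)^2 = D^2 + (2*D) * η i ω + (η i ω)^2 := by
      intro ω; rw [hdecomp i ω]; ring
    rw [integral_congr_ae (Filter.Eventually.of_forall heq)]
    have i1 : Integrable (fun _ : Ω => D^2) ℙ := integrable_const _
    have i2 : Integrable (fun ω => (2*D) * η i ω) ℙ :=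
      ((hηL2 i).integrable one_le_two).const_mul _
    have i3 : Integrable (fun ω => (η i ω)^2) ℙ := by
      have := (hηL2 i).integrable_sq
      simpa [Pi.pow_apply] using this
    have i12 : Integrable (fun ω => D^2 + (2*D) * η i ω) ℙ := by
      simpa using i1.add i2
    rw [integral_add i12 i3, integral_add i1 i2, integral_const,
      integral_const_mul, hηmean i, hηvar i]
    simp
  -- integrability of each summand
  have hsumint : ∀ i ∈ range (M-1), Integrable (fun ω => (v₂ (i+1) ω - v₂ i ω)^2) ℙ := by
    intro i _
    have hm : MemLp (fun ω => v₂ (i+1) ω - v₂ i ω) 2 ℙ := by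
      have : (fun ω => v₂ (i+1) ω - v₂ i ω)
          = fun ω => (u₂ (i+1) - u₂ i) + η i ω := by
        funext ω; exact hdecomp i ω
      rw [this]
      exact (memLp_const (μ := ℙ) (p := 2) (u₂ (i+1) - u₂ i)).add (hηL2 i)
    have := hm.integrable_sq
    simpa [Pi.pow_apply] using this
  calc ∫ ω, V₃ ω = (1/(4*h)) * ∫ ω, ∑ i ∈ range (M-1), (v₂ (i+1) ω - v₂ i ω)^2 := by
        rw [← integral_const_mul]
        exact integral_congr_ae (Filter.Eventually.of_forall hV3)
    _ = (1/(4*h)) * ∑ i ∈ range (M-1), ((u₂ (i+1) - u₂ i)^2 + σ^2/(4*M*h)) := by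
        rw [integral_finset_sum _ hsumint]
        congr 1
        exact Finset.sum_congr rfl fun i _ => hkey i
    _ = (1/16 - 1/(4*(4*M : ℕ))) * (σ^2/h^2)
        + (1/(4*h)) * ∑ i ∈ range (M-1), (u₂ (i+1) - u₂ i)^2 := by
        rw [Finset.sum_add_distrib, Finset.sum_const, card_range, nsmul_eq_mul]
        have hcast : ((M-1 : ℕ) : ℝ) = (M:ℝ) - 1 := by
          have : (1:ℕ) ≤ M := hM
          push_cast [Nat.cast_sub this]
          ring
        rw [hcast]
        push_cast
        have hne : h ≠ 0 := ne_of_gt hh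
        have hMne : (M:ℝ) ≠ 0 := ne_of_gt hMpos
        field_simp
        ring
end
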